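/- Let (G_{m,i})_{m,i∈ℕ} be a system of open subsets of X such that: (a) the sets G_{m,1}, m ∈ ℕ, are pairwise disjoint; (b) G_{m,1} ⊇ G_{m,2} ⊇ G_{m,3} ⊇ … for each m; (c) m(G_{m,i}) > 0 for all m, i; (d) lim_{i→∞} m(G_{m,i}) = 0 for each m; (e) m(∪_m G_{m,1}) < ∞. For each m ∈ ℕ and each sequence s = (s_n)_n of positive integers, set H_{m,s} = ∪_{n≥m} G_{n,s_n} and let μ_{m,s} be the restriction of m to H_{m,s}. Suppose E_0 ⊆ M^+(X) contains all the measures μ_{m,s}. Then there exists an increasing sequence (E_m)_{m≥1} of subsets of E_0 such that AM(∪_m E_m) > lim_{m→∞} AM(E_m). -/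

import Mathlib

open MeasureTheory Filter Topology BoundedContinuousFunction ENNReal NNReal

noncomputable section

namespace AMPaper

variable (X : Type*) [TopologicalSpace X] [MeasurableSpace X]

/-- The topology `τ_b` on the space of finite nonnegative Borel measures:
the weak topology induced by the pairings `μ ↦ ∫ g dμ`, `g ∈ C_b(X)`. -/
def taub : TopologicalSpace (FiniteMeasure X) :=
  ⨅ g : X →ᵇ ℝ,
    TopologicalSpace.induced (fun μ : FiniteMeasure X => ∫ x, g x ∂(μ : Measure X)) inferInstance

/-- The topology `τ_A` induced by the pairings with functions from `A ⊆ C_b(X)`. -/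
def tauA (A : Set (X →ᵇ ℝ)) : TopologicalSpace (FiniteMeasure X) :=
  ⨅ g ∈ A,
    TopologicalSpace.induced (fun μ : FiniteMeasure X => ∫ x, g x ∂(μ : Measure X)) inferInstance

variable {X}

/-- A closed linear sublattice of `C_b(X)`. -/
structure IsClosedSublattice (A : Set (X →ᵇ ℝ)) : Prop where
  isClosed : IsClosed A
  zero_mem : (0 : X →ᵇ ℝ) ∈ A
  add_mem : ∀ ⦃f g : X →ᵇ ℝ⦄, f ∈ A → g ∈ A → f + g ∈ A
  smul_mem : ∀ (c : ℝ) ⦃f : X →ᵇ ℝ⦄, f ∈ A → c • f ∈ A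
  sup_mem : ∀ ⦃f g h : X →ᵇ ℝ⦄, f ∈ A → g ∈ A → (∀ x, h x = max (f x) (g x)) → h ∈ A
  inf_mem : ∀ ⦃f g h : X →ᵇ ℝ⦄, f ∈ A → g ∈ A → (∀ x, h x = min (f x) (g x)) → h ∈ A

/-- An acceptable subspace of `C_b(X)`: a closed linear sublattice satisfying
the separation property (A2). -/
structure IsAcceptable (A : Set (X →ᵇ ℝ)) extends IsClosedSublattice A : Prop where
  sep : ∀ F : Set X, IsClosed F → ∀ x ∉ F, ∃ g ∈ A,
    (∀ y, 0 ≤ g y) ∧ (∀ y, g y ≤ 1) ∧ g x = 1 ∧ ∀ y ∈ F, g y = 0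

/-- A lower semicontinuous `ρ : X → [0,∞]` is admissible for `E` if `∫ ρ dμ ≥ 1` for all `μ ∈ E`. -/
def AdmissibleFun (ρ : X → ℝ≥0∞) (E : Set (FiniteMeasure X)) : Prop :=
  LowerSemicontinuous ρ ∧ ∀ μ ∈ E, 1 ≤ ∫⁻ x, ρ x ∂(μ : Measure X)

/-- The `M_p` modulus of a family of measures. -/
def Mmod (p : ℝ) (m : Measure X) (E : Set (FiniteMeasure X)) : ℝ≥0∞ :=
  ⨅ (ρ : X → ℝ≥0∞) (_ : AdmissibleFun ρ E), ∫⁻ x, ρ x ^ p ∂m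

/-- The continuous modulus `M_{p,c}^A`, with test functions nonnegative elements of `A`. -/
def McMod (p : ℝ) (A : Set (X →ᵇ ℝ)) (m : Measure X) (E : Set (FiniteMeasure X)) : ℝ≥0∞ :=
  ⨅ (g : X →ᵇ ℝ) (_ : g ∈ A ∧ (∀ x, 0 ≤ g x) ∧
      ∀ μ ∈ E, 1 ≤ ∫⁻ x, ENNReal.ofReal (g x) ∂(μ : Measure X)),
    ∫⁻ x, ENNReal.ofReal (g x) ^ p ∂m

/-- A sequence of lower semicontinuous functions `ρ_j : X → [0,∞]` is an admissible sequence
for `E` if `liminf_j ∫ ρ_j dμ ≥ 1` for all `μ ∈ E`. -/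
def AdmissibleSeq (ρ : ℕ → X → ℝ≥0∞) (E : Set (FiniteMeasure X)) : Prop :=
  (∀ j, LowerSemicontinuous (ρ j)) ∧
    ∀ μ ∈ E, 1 ≤ Filter.liminf (fun j => ∫⁻ x, ρ j x ∂(μ : Measure X)) Filter.atTop

/-- The approximation modulus `AM_p` of a family of measures. -/
def AMmod (p : ℝ) (m : Measure X) (E : Set (FiniteMeasure X)) : ℝ≥0∞ :=
  ⨅ (ρ : ℕ → X → ℝ≥0∞) (_ : AdmissibleSeq ρ E),
    Filter.liminf (fun j => ∫⁻ x, ρ j x ^ p ∂m) Filter.atTop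

/-- The continuous approximation modulus `AM_{p,c}^A`. -/
def AMcMod (p : ℝ) (A : Set (X →ᵇ ℝ)) (m : Measure X) (E : Set (FiniteMeasure X)) : ℝ≥0∞ :=
  ⨅ (g : ℕ → X →ᵇ ℝ) (_ : (∀ j, g j ∈ A ∧ ∀ x, 0 ≤ g j x) ∧
      ∀ μ ∈ E, 1 ≤ Filter.liminf
        (fun j => ∫⁻ x, ENNReal.ofReal (g j x) ∂(μ : Measure X)) Filter.atTop),
    Filter.liminf (fun j => ∫⁻ x, ENNReal.ofReal (g j x) ^ p ∂m) Filter.atTop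

/-- The `L^q(m)`-norm of a function `f : X → [0,∞]`. -/
def lqNorm (q : ℝ≥0∞) (m : Measure X) (f : X → ℝ≥0∞) : ℝ≥0∞ :=
  if q = ∞ then essSup f m else (∫⁻ x, f x ^ q.toReal ∂m) ^ (1 / q.toReal)

variable (X) in
/-- The `p`-content (depending on `p` only through the conjugate exponent `q`):
the supremum of the outer measures `η*(E)` over all plans `η` — finite Borel measures on
`(M^+(X), τ_b)` — whose barycenter `η^#` is absolutely continuous w.r.t. `m` with density
of `L^q(m)`-norm at most `1`. -/
def Ct (q : ℝ≥0∞) (m : Measure X) (E : Set (FiniteMeasure X)) : ℝ≥0∞ :=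
  ⨆ (η : @Measure (FiniteMeasure X) (@borel (FiniteMeasure X) (taub X)))
    (_ : η Set.univ < ∞ ∧ ∃ f : X → ℝ≥0∞, Measurable f ∧
      (∀ B : Set X, MeasurableSet B → (∫⁻ μ, (μ : Measure X) B ∂η) = ∫⁻ x in B, f x ∂m) ∧
      lqNorm q m f ≤ 1),
    η E


theorem stmt12 {X : Type*} [TopologicalSpace X] [PolishSpace X] [MeasurableSpace X] [BorelSpace X]
    (m : Measure X) [IsFiniteMeasureOnCompacts m] [m.InnerRegular]
    (G : ℕ → ℕ → Set X) (hopen : ∀ k i, IsOpen (G k i))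
    (hdisj : Pairwise fun k l => Disjoint (G k 0) (G l 0))
    (hanti : ∀ k, Antitone (G k))
    (hpos : ∀ k i, 0 < m (G k i))
    (hlim : ∀ k, Tendsto (fun i => m (G k i)) atTop (𝓝 0))
    (hfin : m (⋃ k, G k 0) < ∞)
    (E₀ : Set (FiniteMeasure X))
    (hE₀ : ∀ (k : ℕ) (s : ℕ → ℕ) (μ : FiniteMeasure X),
      (μ : Measure X) = m.restrict (⋃ n ∈ Set.Ici k, G n (s n)) → μ ∈ E₀) :
    ∃ E : ℕ → Set (FiniteMeasure X), Monotone E ∧ (∀ k, E k ⊆ E₀) ∧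
      (⨆ k, AMmod 1 m (E k)) < AMmod 1 m (⋃ k, E k) := by
  classical
  -- basic set facts
  have hGsub0 : ∀ k i, G k i ⊆ G k 0 := fun k i => hanti k (Nat.zero_le i)
  have hGdisj : ∀ {n n' : ℕ} (i i' : ℕ), n ≠ n' → Disjoint (G n i) (G n' i') :=
    fun {n n'} i i' h => (hdisj h).mono (hGsub0 n i) (hGsub0 n' i')
  set H : ℕ → (ℕ → ℕ) → Set X := fun k s => ⋃ n ∈ Set.Ici k, G n (s n) with hHdef
  have hHopen : ∀ k s, IsOpen (H k s) := fun k s => isOpen_biUnion fun n _ => hopen n (s n)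
  have hHmeas : ∀ k s, MeasurableSet (H k s) := fun k s => (hHopen k s).measurableSet
  have hHsubW : ∀ k s, H k s ⊆ ⋃ n, G n 0 := fun k s =>
    Set.iUnion₂_subset fun n _ => (hGsub0 n (s n)).trans (Set.subset_iUnion (fun n => G n 0) n)
  have hHfin : ∀ k s, m (H k s) < ∞ := fun k s =>
    lt_of_le_of_lt (measure_mono (hHsubW k s)) hfin
  have hGfin : ∀ k i, m (G k i) ≠ ∞ := fun k i =>
    (lt_of_le_of_lt (measure_mono ((hGsub0 k i).trans (Set.subset_iUnion (fun n => G n 0) k))) hfin).ne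
  -- the finite measures μ_{k,s}
  let μH : ℕ → (ℕ → ℕ) → FiniteMeasure X := fun k s =>
    ⟨m.restrict (H k s), ⟨by rw [Measure.restrict_apply_univ]; exact hHfin k s⟩⟩
  -- the family E
  let Ek : ℕ → Set (FiniteMeasure X) := fun k =>
    {μ | ∃ n, n ≤ k ∧ ∃ s : ℕ → ℕ, (μ : Measure X) = m.restrict (H n s)}
  have hμHmem : ∀ k s, μH k s ∈ Ek k := fun k s => ⟨k, le_rfl, s, rfl⟩
  -- the constant ε = 1/16
  set ε : ℝ≥0∞ := (16 : ℝ≥0∞)⁻¹ with hεdef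
  have hε0 : ε ≠ 0 := ENNReal.inv_ne_zero.mpr (by norm_num)
  have hεtop : ε ≠ ∞ := by rw [hεdef]; exact ENNReal.inv_ne_top.mpr (by norm_num)
  have hε16 : (16 : ℝ≥0∞) * ε = 1 := ENNReal.mul_inv_cancel (by norm_num) (by norm_num)
  have hmullt : ∀ a b : ℕ, a < b → (a : ℝ≥0∞) * ε < (b : ℝ≥0∞) * ε := fun a b h =>
    (ENNReal.mul_lt_mul_iff_left hε0 hεtop).mpr (by exact_mod_cast h)
  -- upper bound : AMmod (Ek k) ≤ 1
  have hupper : ∀ k, AMmod 1 m (Ek k) ≤ 1 := by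
    intro k
    set ρ : ℕ → X → ℝ≥0∞ := fun j => (G k j).indicator (fun _ => (m (G k j))⁻¹) with hρdef
    have hcost : ∀ j : ℕ, ∫⁻ x, ρ j x ∂m = 1 := by
      intro j
      rw [hρdef]
      rw [lintegral_indicator (hopen k j).measurableSet, setLIntegral_const]
      exact ENNReal.inv_mul_cancel (hpos k j).ne' (hGfin k j)
    have hadm : AdmissibleSeq ρ (Ek k) := by
      constructor
      · intro j
        exact (hopen k j).lowerSemicontinuous_indicator zero_le
      · rintro μ ⟨n, hn, s, hs⟩
        refine Filter.le_liminf_of_le (by isBoundedDefault) ?_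
        filter_upwards [Filter.eventually_ge_atTop (s k)] with j hj
        have hsub : G k j ⊆ H n s := by
          refine (hanti k hj).trans ?_
          exact Set.subset_biUnion_of_mem (u := fun n' => G n' (s n'))
            (show k ∈ Set.Ici n from hn)
        rw [hs, hρdef]
        rw [lintegral_indicator (hopen k j).measurableSet, setLIntegral_const,
          Measure.restrict_apply (hopen k j).measurableSet, Set.inter_eq_left.mpr hsub,
          ENNReal.inv_mul_cancel (hpos k j).ne' (hGfin k j)]
    calc AMmod 1 m (Ek k)
        ≤ Filter.liminf (fun j => ∫⁻ x, ρ j x ^ (1:ℝ) ∂m) Filter.atTop := iInf₂_le ρ hadm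
      _ = 1 := by
          simp only [ENNReal.rpow_one, hcost]
          exact Filter.liminf_const 1
  -- lower bound : 22 ε ≤ AMmod (⋃ k, Ek k)
  have hlower : (22 : ℝ≥0∞) * ε ≤ AMmod 1 m (⋃ k, Ek k) := by
    refine le_iInf fun ρ => le_iInf fun hseq => ?_
    obtain ⟨hlsc, hadm⟩ := hseq
    simp only [ENNReal.rpow_one]
    by_contra hlt
    push_neg at hlt
    have hfreq : ∃ᶠ j in atTop, ∫⁻ x, ρ j x ∂m < 22 * ε :=
      Filter.frequently_lt_of_liminf_lt (by isBoundedDefault) hlt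
    obtain ⟨φ, hφ, hφlt⟩ := Filter.extraction_of_frequently_atTop hfreq
    have hmeasρ : ∀ j, Measurable (ρ j) := fun j => (hlsc j).measurable
    set ν : ℕ → Measure X := fun t => m.withDensity (ρ (φ t)) with hνdef
    have hνapply : ∀ t (s : Set X), MeasurableSet s → ν t s = ∫⁻ x in s, ρ (φ t) x ∂m :=
      fun t s hs => withDensity_apply _ hs
    have hνuniv : ∀ t, ν t Set.univ < 22 * ε := by
      intro t
      rw [hνapply t Set.univ MeasurableSet.univ, Measure.restrict_univ]
      exact hφlt t
    have hνnull : ∀ t (s : Set X), m s = 0 → ν t s = 0 :=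
      fun t s h => (withDensity_absolutelyContinuous m (ρ (φ t))) h
    have h22top : (22 : ℝ≥0∞) * ε ≠ ∞ := ENNReal.mul_ne_top (by norm_num) hεtop
    -- columns vanish in depth
    have hν0 : ∀ t n, Tendsto (fun i => ν t (G n i)) atTop (𝓝 0) := by
      intro t n
      have h2 : m (⋂ i, G n i) = 0 :=
        le_antisymm (ge_of_tendsto' (hlim n) fun i => measure_mono (Set.iInter_subset _ i))
          zero_le
      have h1 : Tendsto (fun i => ν t (G n i)) atTop (𝓝 (ν t (⋂ i, G n i))) :=
        tendsto_measure_iInter_atTop (fun i => (hopen n i).measurableSet.nullMeasurableSet)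
          (fun i j h => hanti n h) ⟨0, (((measure_mono (Set.subset_univ _)).trans_lt (hνuniv t)).trans_le le_top).ne⟩
      rwa [hνnull t _ h2] at h1
    -- admissibility transferred to ν along the subsequence
    have hνH : ∀ (k : ℕ) (σ : ℕ → ℕ), (1 : ℝ≥0∞) ≤ liminf (fun t => ν t (H k σ)) atTop := by
      intro k σ
      have hmem : μH k σ ∈ ⋃ k', Ek k' := Set.mem_iUnion.mpr ⟨k, hμHmem k σ⟩
      have h1 := hadm _ hmem
      refine (Filter.le_liminf_iff (by isBoundedDefault) (by isBoundedDefault)).mpr fun b hb => ?_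
      have h2 : ∀ᶠ j in atTop, b < ∫⁻ x, ρ j x ∂((μH k σ : Measure X)) :=
        ((Filter.le_liminf_iff (by isBoundedDefault) (by isBoundedDefault)).mp h1) b hb
      refine (hφ.tendsto_atTop.eventually h2).mono fun t ht => ?_
      rw [hνapply t _ (hHmeas k σ)]
      exact ht
    -- tail unions
    set A : ℕ → Set X := fun R => ⋃ n ∈ Set.Ici R, G n 0 with hAdef
    have hAmeas : ∀ R, MeasurableSet (A R) :=
      fun R => (isOpen_biUnion fun n _ => hopen n 0).measurableSet
    have hAanti : Antitone A := by
      intro R R' h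
      refine Set.iUnion₂_subset fun n hn => ?_
      exact Set.subset_biUnion_of_mem (u := fun n' => G n' 0) (show n ∈ Set.Ici R from le_trans h hn)
    have hsumG : ∑' n, m (G n 0) ≠ ∞ := by
      rw [← measure_iUnion (fun a b hab => hdisj hab) (fun n => (hopen n 0).measurableSet)]
      exact hfin.ne
    have hAsub : ∀ R, A R ⊆ ⋃ i, G (i + R) 0 := by
      intro R
      refine Set.iUnion₂_subset fun n hn => ?_
      have h : n - R + R = n := Nat.sub_add_cancel hn
      rw [← h]
      exact Set.subset_iUnion (fun i => G (i + R) 0) (n - R)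
    have hmAinter : m (⋂ R, A R) = 0 := by
      refine le_antisymm (ge_of_tendsto' (ENNReal.tendsto_sum_nat_add (fun n => m (G n 0)) hsumG)
        fun R => ?_) zero_le
      calc m (⋂ R', A R') ≤ m (⋃ i, G (i + R) 0) :=
            measure_mono ((Set.iInter_subset A R).trans (hAsub R))
        _ ≤ ∑' i, m (G (i + R) 0) := measure_iUnion_le _
    have htailν : ∀ t, Tendsto (fun R => ν t (A R)) atTop (𝓝 0) := by
      intro t
      have h1 : Tendsto (fun R => ν t (A R)) atTop (𝓝 (ν t (⋂ R, A R))) :=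
        tendsto_measure_iInter_atTop (fun R => (hAmeas R).nullMeasurableSet) hAanti
          ⟨0, (((measure_mono (Set.subset_univ _)).trans_lt (hνuniv t)).trans_le le_top).ne⟩
      rwa [hνnull t _ hmAinter] at h1
    -- Claim 1 : big boxes
    have claim1 : ∀ M : ℕ, ∃ R, M ≤ R ∧ ∃ i : ℕ → ℕ,
        ∀ᶠ t in atTop, 12 * ε ≤ ν t (⋃ n ∈ Set.Ico M R, G n (i n)) := by
      intro M
      by_contra hneg
      push_neg at hneg
      have hneg' : ∀ R, M ≤ R → ∀ i : ℕ → ℕ,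
          ∃ᶠ t in atTop, ν t (⋃ n ∈ Set.Ico M R, G n (i n)) < 12 * ε := by
        intro R hR i
        have h := hneg R hR i
        simpa only [Filter.not_eventually, not_le] using h
      -- step existence lemma
      have hstep : ∀ (T R : ℕ) (σ : ℕ → ℕ), M ≤ R →
          ∃ q : ℕ × ℕ × (ℕ → ℕ), T < q.1 ∧ R < q.2.1 ∧ (∀ n, n < R → q.2.2 n = σ n) ∧
            ν q.1 (⋃ n ∈ Set.Ico M R, G n (σ n)) < 12 * ε ∧
            ν q.1 (A q.2.1) ≤ ε ∧
            ∀ n, R ≤ n → ν q.1 (G n (q.2.2 n)) ≤ 2⁻¹ ^ (n + 1) * ε := by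
        intro T R σ hMR
        obtain ⟨t', ht'T, ht'box⟩ := Filter.frequently_atTop.mp (hneg' R hMR σ) (T + 1)
        have hεpos : (0:ℝ≥0∞) < ε := pos_iff_ne_zero.mpr hε0
        obtain ⟨R', hR'⟩ := (((htailν t').eventually_lt_const hεpos).and
          (Filter.eventually_gt_atTop R)).exists
        have hσ' : ∀ n, ∃ d, ν t' (G n d) ≤ 2⁻¹ ^ (n + 1) * ε := by
          intro n
          have hp : (0:ℝ≥0∞) < 2⁻¹ ^ (n + 1) * ε :=
            ENNReal.mul_pos (pow_ne_zero (n+1) (ENNReal.inv_ne_zero.mpr (by norm_num))) hε0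
          exact ((hν0 t' n).eventually_lt_const hp).exists.imp fun d hd => hd.le
        refine ⟨⟨t', R', fun n => if n < R then σ n else Classical.choose (hσ' n)⟩,
          by omega, hR'.2, fun n hn => if_pos hn, ht'box, hR'.1.le, fun n hn => ?_⟩
        show ν t' (G n (if n < R then σ n else Classical.choose (hσ' n))) ≤ _
        rw [if_neg (not_lt.mpr hn)]
        exact Classical.choose_spec (hσ' n)
      -- the recursive construction
      let S : ℕ → ℕ × ℕ × (ℕ → ℕ) := fun l => Nat.rec ((0, M, fun _ => 0) : ℕ × ℕ × (ℕ → ℕ))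
        (fun _ p => if h : M ≤ p.2.1 then Classical.choose (hstep p.1 p.2.1 p.2.2 h) else p) l
      have hSsucc : ∀ l, S (l + 1) =
          (if h : M ≤ (S l).2.1 then Classical.choose (hstep (S l).1 (S l).2.1 (S l).2.2 h)
           else S l) := fun l => rfl
      have hM : ∀ l, M ≤ (S l).2.1 := by
        intro l
        induction l with
        | zero => exact le_rfl
        | succ l ih =>
          rw [hSsucc l, dif_pos ih]
          exact ih.trans (Classical.choose_spec (hstep (S l).1 (S l).2.1 (S l).2.2 ih)).2.1.le
      have hSpec : ∀ l, (S l).1 < (S (l+1)).1 ∧ (S l).2.1 < (S (l+1)).2.1 ∧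
          (∀ n, n < (S l).2.1 → (S (l+1)).2.2 n = (S l).2.2 n) ∧
          ν (S (l+1)).1 (⋃ n ∈ Set.Ico M (S l).2.1, G n ((S l).2.2 n)) < 12 * ε ∧
          ν (S (l+1)).1 (A (S (l+1)).2.1) ≤ ε ∧
          (∀ n, (S l).2.1 ≤ n → ν (S (l+1)).1 (G n ((S (l+1)).2.2 n)) ≤ 2⁻¹ ^ (n + 1) * ε) := by
        intro l
        have h := Classical.choose_spec (hstep (S l).1 (S l).2.1 (S l).2.2 (hM l))
        rw [hSsucc l, dif_pos (hM l)]
        exact h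
      have hRmono : StrictMono fun l => (S l).2.1 := strictMono_nat_of_lt_succ fun l => (hSpec l).2.1
      have htmono : StrictMono fun l => (S l).1 := strictMono_nat_of_lt_succ fun l => (hSpec l).1
      have hagree : ∀ l l', l ≤ l' → ∀ n, n < (S l).2.1 → (S l').2.2 n = (S l).2.2 n := by
        intro l l' hll'
        induction l', hll' using Nat.le_induction with
        | base => intro n _; rfl
        | succ l'' hll'' ih =>
          intro n hn
          rw [(hSpec l'').2.2.1 n (lt_of_lt_of_le hn (hRmono.monotone hll''))]
          exact ih n hn
      set σω : ℕ → ℕ := fun n => (S (n+1)).2.2 n with hσωdef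
      have hσω : ∀ l n, n < (S l).2.1 → σω n = (S l).2.2 n := by
        intro l n hn
        rcases le_total l (n+1) with h | h
        · exact hagree l (n+1) h n hn
        · exact (hagree (n+1) l h n (lt_of_lt_of_le (Nat.lt_succ_self n) hRmono.le_apply)).symm
      -- evaluation along the diagonal
      have hEval : ∀ l, ν ((S (l+1)).1) (H M σω) ≤ 14 * ε := by
        intro l
        have hsubset : H M σω ⊆ (⋃ n ∈ Set.Ico M (S l).2.1, G n (σω n)) ∪
            ((⋃ n ∈ Set.Ico (S l).2.1 (S (l+1)).2.1, G n (σω n)) ∪ A (S (l+1)).2.1) := by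
          refine Set.iUnion₂_subset fun n hn => ?_
          rcases lt_or_ge n (S l).2.1 with h1 | h1
          · exact (Set.subset_biUnion_of_mem (u := fun n' => G n' (σω n'))
              (show n ∈ Set.Ico M (S l).2.1 from ⟨hn, h1⟩)).trans Set.subset_union_left
          · rcases lt_or_ge n (S (l+1)).2.1 with h2 | h2
            · exact ((Set.subset_biUnion_of_mem (u := fun n' => G n' (σω n'))
                (show n ∈ Set.Ico (S l).2.1 (S (l+1)).2.1 from ⟨h1, h2⟩)).trans
                Set.subset_union_left).trans Set.subset_union_right
            · exact ((hGsub0 n (σω n)).trans ((Set.subset_biUnion_of_mem (u := fun n' => G n' 0)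
                (show n ∈ Set.Ici (S (l+1)).2.1 from h2)).trans
                Set.subset_union_right)).trans Set.subset_union_right
        have hbox : ν ((S (l+1)).1) (⋃ n ∈ Set.Ico M (S l).2.1, G n (σω n)) ≤ 12 * ε := by
          have he : (⋃ n ∈ Set.Ico M (S l).2.1, G n (σω n)) =
              ⋃ n ∈ Set.Ico M (S l).2.1, G n ((S l).2.2 n) :=
            Set.iUnion₂_congr fun n hn => by rw [hσω l n hn.2]
          rw [he]
          exact (hSpec l).2.2.2.1.le
        have hmid : ν ((S (l+1)).1) (⋃ n ∈ Set.Ico (S l).2.1 (S (l+1)).2.1, G n (σω n)) ≤ ε := by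
          calc ν ((S (l+1)).1) (⋃ n ∈ Set.Ico (S l).2.1 (S (l+1)).2.1, G n (σω n))
              ≤ ∑ n ∈ Finset.Ico (S l).2.1 (S (l+1)).2.1, ν ((S (l+1)).1) (G n (σω n)) := by
                rw [← Finset.coe_Ico, Finset.set_biUnion_coe]
                exact measure_biUnion_finset_le _ _
            _ ≤ ∑ n ∈ Finset.Ico (S l).2.1 (S (l+1)).2.1, 2⁻¹ ^ (n+1) * ε := by
                refine Finset.sum_le_sum fun n hn => ?_
                rw [Finset.mem_Ico] at hn
                rw [hσω (l+1) n hn.2]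
                exact (hSpec l).2.2.2.2.2 n hn.1
            _ ≤ ∑' n : ℕ, 2⁻¹ ^ (n+1) * ε := ENNReal.sum_le_tsum _
            _ = ε := by
                rw [ENNReal.tsum_mul_right]
                have h1 : ∑' n : ℕ, (2:ℝ≥0∞)⁻¹ ^ (n+1) = 1 := by
                  simp only [pow_succ]
                  rw [ENNReal.tsum_mul_right, ENNReal.tsum_geometric, ENNReal.one_sub_inv_two,
                    inv_inv]
                  exact ENNReal.mul_inv_cancel (by norm_num) (by norm_num)
                rw [h1, one_mul]
        have htail : ν ((S (l+1)).1) (A (S (l+1)).2.1) ≤ ε := (hSpec l).2.2.2.2.1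
        calc ν ((S (l+1)).1) (H M σω)
            ≤ ν ((S (l+1)).1) (⋃ n ∈ Set.Ico M (S l).2.1, G n (σω n)) +
              (ν ((S (l+1)).1) (⋃ n ∈ Set.Ico (S l).2.1 (S (l+1)).2.1, G n (σω n)) +
               ν ((S (l+1)).1) (A (S (l+1)).2.1)) :=
              (measure_mono hsubset).trans ((measure_union_le _ _).trans
                (add_le_add_right (measure_union_le _ _) _))
          _ ≤ 12 * ε + (ε + ε) := add_le_add hbox (add_le_add hmid htail)
          _ = 14 * ε := by ring
      have hfr : ∃ᶠ t in atTop, ν t (H M σω) ≤ 14 * ε := by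
        rw [Filter.frequently_atTop]
        intro a
        exact ⟨(S (a+1)).1, le_trans (Nat.le_succ a) htmono.le_apply, hEval a⟩
      have hcontr : (1:ℝ≥0∞) ≤ 14 * ε := (hνH M σω).trans (Filter.liminf_le_of_frequently_le hfr)
      have h14 : (14 : ℝ≥0∞) * ε < 1 := by
        rw [← hε16]
        exact hmullt 14 16 (by norm_num)
      exact absurd hcontr (not_le.mpr h14)
    -- finish using two disjoint boxes
    obtain ⟨R₁, hR₁, i₁, hB₁⟩ := claim1 0
    obtain ⟨R₂, hR₂, i₂, hB₂⟩ := claim1 R₁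
    obtain ⟨t, hb₁, hb₂⟩ := (hB₁.and hB₂).exists
    set B₁ : Set X := ⋃ n ∈ Set.Ico 0 R₁, G n (i₁ n) with hB₁def
    set B₂ : Set X := ⋃ n ∈ Set.Ico R₁ R₂, G n (i₂ n) with hB₂def
    have hdisjB : Disjoint B₁ B₂ := by
      rw [hB₁def, hB₂def]
      refine Set.disjoint_iUnion₂_left.mpr fun n hn => ?_
      refine Set.disjoint_iUnion₂_right.mpr fun n' hn' => ?_
      exact hGdisj _ _ (Nat.ne_of_lt (lt_of_lt_of_le hn.2 hn'.1))
    have hBmeas : MeasurableSet B₂ :=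
      (isOpen_biUnion fun n _ => hopen n (i₂ n)).measurableSet
    have hfinal : (24 : ℝ≥0∞) * ε ≤ ν t Set.univ := by
      calc (24 : ℝ≥0∞) * ε = 12 * ε + 12 * ε := by ring
        _ ≤ ν t B₁ + ν t B₂ := add_le_add hb₁ hb₂
        _ = ν t (B₁ ∪ B₂) := (measure_union hdisjB hBmeas).symm
        _ ≤ ν t Set.univ := measure_mono (Set.subset_univ _)
    have h2422 : (24 : ℝ≥0∞) * ε < 22 * ε := hfinal.trans_lt (hνuniv t)
    have : (24 : ℝ≥0∞) < 22 := (ENNReal.mul_lt_mul_iff_left hε0 hεtop).mp h2422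
    exact absurd this (by norm_num)
  -- assemble
  refine ⟨Ek, ?_, ?_, ?_⟩
  · intro a b hab μ hμ
    obtain ⟨n, hn, s, hs⟩ := hμ
    exact ⟨n, hn.trans hab, s, hs⟩
  · intro k μ hμ
    obtain ⟨n, _, s, hs⟩ := hμ
    exact hE₀ n s μ hs
  · have h1 : (⨆ k, AMmod 1 m (Ek k)) ≤ 1 := iSup_le hupper
    have h2 : (1 : ℝ≥0∞) < 22 * ε := by
      rw [← hε16]
      exact hmullt 16 22 (by norm_num)
    exact lt_of_le_of_lt h1 (lt_of_lt_of_le h2 hlower)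


end AMPaper

end
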